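/- In the free group on a and b, every regular balanced even word, i.e. every product of the form b a^{r₁} b⁻¹ a^{r₂} b a^{r₃} b⁻¹ ⋯ b a^{r_{2m−1}} b⁻¹ with r₁ + r₂ + ⋯ + r_{2m−1} even, lies in the subgroup generated by a², b a² b⁻¹, and [b,a] = bab⁻¹a⁻¹. -/

import Mathlib

section Aux

variable {G : Type*} [Group G] (a c : G)

private def Hgrp : Subgroup G := Subgroup.closure {a ^ 2, c ^ 2, c * a⁻¹}

private lemma h_a2 : a ^ 2 ∈ Hgrp a c :=
  Subgroup.subset_closure (by left; rfl)

private lemma h_c2 : c ^ 2 ∈ Hgrp a c :=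
  Subgroup.subset_closure (by right; left; rfl)

private lemma h_ca : c * a⁻¹ ∈ Hgrp a c :=
  Subgroup.subset_closure (by right; right; rfl)

private lemma h_ac : a * c ∈ Hgrp a c := by
  have := mul_mem (inv_mem (h_ca a c)) (h_c2 a c)
  have e : (c * a⁻¹)⁻¹ * c ^ 2 = a * c := by group
  rwa [e] at this

private lemma h_ca' : c * a ∈ Hgrp a c := by
  have := mul_mem (h_ca a c) (h_a2 a c)
  have e : (c * a⁻¹) * a ^ 2 = c * a := by group
  rwa [e] at this

private lemma conj_a_mem : ∀ x ∈ Hgrp a c, a * x * a⁻¹ ∈ Hgrp a c := by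
  intro x hx
  induction hx using Subgroup.closure_induction with
  | mem y hy =>
    rcases hy with h | h | h
    · subst h
      have e : a * a ^ 2 * a⁻¹ = a ^ 2 := by group
      rw [e]; exact h_a2 a c
    · subst h
      have := mul_mem (h_ac a c) (h_ca a c)
      have e : (a * c) * (c * a⁻¹) = a * c ^ 2 * a⁻¹ := by rw [pow_two]; group
      rwa [e] at this
    · subst h
      have := mul_mem (h_ac a c) (inv_mem (h_a2 a c))
      have e : (a * c) * (a ^ 2)⁻¹ = a * (c * a⁻¹) * a⁻¹ := by group
      rwa [e] at this
  | one =>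
    have e : a * 1 * a⁻¹ = (1 : G) := by group
    rw [e]; exact one_mem _
  | mul x y _ _ hx hy =>
    have := mul_mem hx hy
    have e : (a * x * a⁻¹) * (a * y * a⁻¹) = a * (x * y) * a⁻¹ := by group
    rwa [e] at this
  | inv x _ hx =>
    have := inv_mem hx
    have e : (a * x * a⁻¹)⁻¹ = a * x⁻¹ * a⁻¹ := by group
    rwa [e] at this

private lemma conj_ainv_mem : ∀ x ∈ Hgrp a c, a⁻¹ * x * a ∈ Hgrp a c := by
  intro x hx
  induction hx using Subgroup.closure_induction with
  | mem y hy =>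
    rcases hy with h | h | h
    · subst h
      have e : a⁻¹ * a ^ 2 * a = a ^ 2 := by group
      rw [e]; exact h_a2 a c
    · subst h
      have := mul_mem (mul_mem (inv_mem (h_a2 a c)) (h_ac a c)) (h_ca' a c)
      have e : (a ^ 2)⁻¹ * (a * c) * (c * a) = a⁻¹ * c ^ 2 * a := by rw [pow_two c]; group
      rwa [e] at this
    · subst h
      have := mul_mem (inv_mem (h_a2 a c)) (h_ac a c)
      have e : (a ^ 2)⁻¹ * (a * c) = a⁻¹ * (c * a⁻¹) * a := by group
      rwa [e] at this
  | one =>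
    have e : a⁻¹ * 1 * a = (1 : G) := by group
    rw [e]; exact one_mem _
  | mul x y _ _ hx hy =>
    have := mul_mem hx hy
    have e : (a⁻¹ * x * a) * (a⁻¹ * y * a) = a⁻¹ * (x * y) * a := by group
    rwa [e] at this
  | inv x _ hx =>
    have := inv_mem hx
    have e : (a⁻¹ * x * a)⁻¹ = a⁻¹ * x⁻¹ * a := by group
    rwa [e] at this

private lemma conj_zpow_mem (s : ℤ) {x : G} (hx : x ∈ Hgrp a c) :
    a ^ s * x * a ^ (-s) ∈ Hgrp a c := by
  induction s using Int.induction_on with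
  | zero => simpa using hx
  | succ n ih =>
    have := conj_a_mem a c _ ih
    have e : a * (a ^ (n : ℤ) * x * a ^ (-(n : ℤ))) * a⁻¹
        = a ^ ((n : ℤ) + 1) * x * a ^ (-((n : ℤ) + 1)) := by group
    rwa [e] at this
  | pred n ih =>
    have := conj_ainv_mem a c _ ih
    have e : a⁻¹ * (a ^ (-(n : ℤ)) * x * a ^ (-(-(n : ℤ)))) * a
        = a ^ (-(n : ℤ) - 1) * x * a ^ (-(-(n : ℤ) - 1)) := by group
    rwa [e] at this

private lemma cp_mem (p : ℤ) : c ^ p * a ^ (-p) ∈ Hgrp a c := by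
  induction p using Int.induction_on with
  | zero => simpa using one_mem (Hgrp a c)
  | succ n ih =>
    have := mul_mem (h_ca a c) (conj_a_mem a c _ ih)
    have e : (c * a⁻¹) * (a * (c ^ (n : ℤ) * a ^ (-(n : ℤ))) * a⁻¹)
        = c ^ ((n : ℤ) + 1) * a ^ (-((n : ℤ) + 1)) := by group
    rwa [e] at this
  | pred n ih =>
    have hca' : c⁻¹ * a ∈ Hgrp a c := by
      have h1 := mul_mem (inv_mem (h_a2 a c)) (h_ac a c)
      have e1 : (a ^ 2)⁻¹ * (a * c) = a⁻¹ * c := by group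
      rw [e1] at h1
      have h2 := inv_mem h1
      rwa [mul_inv_rev, inv_inv] at h2
    have := mul_mem hca' (conj_ainv_mem a c _ ih)
    have e : (c⁻¹ * a) * (a⁻¹ * (c ^ (-(n : ℤ)) * a ^ (-(-(n : ℤ)))) * a)
        = c ^ (-(n : ℤ) - 1) * a ^ (-(-(n : ℤ) - 1)) := by group
    rwa [e] at this

private lemma main_aux (r : ℕ → ℤ) :
    ∀ n : ℕ,
      ((List.range n).map (fun k => c ^ (r (2 * k + 1)) * a ^ (r (2 * k + 2)))).prod
        * a ^ (-(∑ k ∈ Finset.range (2 * n), r (k + 1))) ∈ Hgrp a c := by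
  intro n
  induction n with
  | zero => simpa using one_mem (Hgrp a c)
  | succ n ih =>
    have key := mul_mem ih
      (conj_zpow_mem a c (∑ k ∈ Finset.range (2 * n), r (k + 1))
        (cp_mem a c (r (2 * n + 1))))
    rw [List.range_succ, List.map_append, List.prod_append]
    have hsum : (∑ k ∈ Finset.range (2 * (n + 1)), r (k + 1))
        = (∑ k ∈ Finset.range (2 * n), r (k + 1)) + r (2 * n + 1) + r (2 * n + 2) := by
      have h1 : 2 * (n + 1) = (2 * n + 1) + 1 := by ring
      rw [h1, Finset.sum_range_succ, Finset.sum_range_succ]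
    rw [hsum]
    set w := ((List.range n).map (fun k => c ^ (r (2 * k + 1)) * a ^ (r (2 * k + 2)))).prod
    set S := ∑ k ∈ Finset.range (2 * n), r (k + 1)
    set p := r (2 * n + 1)
    set q := r (2 * n + 2)
    have e : (w * a ^ (-S)) * (a ^ S * (c ^ p * a ^ (-p)) * a ^ (-S))
        = w * ([c ^ p * a ^ q]).prod * a ^ (-(S + p + q)) := by
      simp only [List.prod_cons, List.prod_nil, mul_one]
      group
    rwa [e] at key

end Aux

theorem regular_balanced_even_word_mem (m : ℕ) (hm : 1 ≤ m) (r : ℕ → ℤ)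
    (a b : FreeGroup Bool)
    (ha : a = FreeGroup.of true) (hb : b = FreeGroup.of false)
    (hlast : r (2 * m) = 0)
    (heven : Even (∑ k ∈ Finset.range (2 * m - 1), r (k + 1))) :
    ((List.range m).map
        (fun k => b * a ^ (r (2 * k + 1)) * b⁻¹ * a ^ (r (2 * k + 2)))).prod ∈
      Subgroup.closure ({a ^ 2, b * a ^ 2 * b⁻¹, b * a * b⁻¹ * a⁻¹} :
        Set (FreeGroup Bool)) := by
  set c := b * a * b⁻¹ with hc
  have hset : ({a ^ 2, b * a ^ 2 * b⁻¹, b * a * b⁻¹ * a⁻¹} : Set (FreeGroup Bool))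
      = {a ^ 2, c ^ 2, c * a⁻¹} := by
    have h2 : b * a ^ 2 * b⁻¹ = c ^ 2 := by rw [hc, pow_two, pow_two]; group
    rw [h2, hc]
  rw [hset]
  have hmap : ((List.range m).map
      (fun k => b * a ^ (r (2 * k + 1)) * b⁻¹ * a ^ (r (2 * k + 2))))
      = ((List.range m).map (fun k => c ^ (r (2 * k + 1)) * a ^ (r (2 * k + 2)))) := by
    apply List.map_congr_left
    intro k _
    rw [hc, conj_zpow]
  rw [hmap]
  -- total sum is even
  have hS : Even (∑ k ∈ Finset.range (2 * m), r (k + 1)) := by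
    have h1 : 2 * m = (2 * m - 1) + 1 := by omega
    rw [h1, Finset.sum_range_succ]
    have h2 : (2 * m - 1) + 1 = 2 * m := by omega
    rw [h2, hlast, add_zero]
    exact heven
  obtain ⟨t, ht⟩ := hS
  have key := main_aux a c r m
  have haS : (a : FreeGroup Bool) ^ (∑ k ∈ Finset.range (2 * m), r (k + 1)) ∈ Hgrp a c := by
    rw [ht]
    have h := zpow_mem (h_a2 a c) t
    have e : (a ^ 2) ^ t = a ^ (t + t) := by group
    rwa [e] at h
  have := mul_mem key haS
  have e : (((List.range m).map (fun k => c ^ (r (2 * k + 1)) * a ^ (r (2 * k + 2)))).prod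
      * a ^ (-(∑ k ∈ Finset.range (2 * m), r (k + 1))))
      * a ^ (∑ k ∈ Finset.range (2 * m), r (k + 1))
      = ((List.range m).map (fun k => c ^ (r (2 * k + 1)) * a ^ (r (2 * k + 2)))).prod := by
    group
  rwa [e] at this
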